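/- Let n = a + 1 ≥ 1 and consider the function vol(t) on [0,2] defined by vol(t) = H² + 3·H·K for t ∈ [0,1] and vol(t) = (2-t)·((t² - t + 1)·H² + 3t·H·K) for t ∈ [1,2], where H² and H·K are positive real constants. Then (1/(H² + 3·H·K)) · ∫₀² vol(t) dt = ((7/4)·H² + 5·H·K)/(H² + 3·H·K), and this quantity is strictly greater than 5/3. -/

import Mathlib

/-- The computation of `S_X(Y)` in Example 3.6: with `H2 = H²`, `HK = H·(-K_S)` positive,
the normalized integral of the piecewise volume function equals
`((7/4)H² + 5H·(-K_S))/(H² + 3H·(-K_S)) > 5/3`. -/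
theorem stmt_4 (H2 HK : ℝ) (hH2 : 0 < H2) (hHK : 0 < HK) :
    (1 / (H2 + 3 * HK)) *
        (∫ t in (0:ℝ)..2,
          if t ≤ 1 then H2 + 3 * HK
          else (2 - t) * ((t ^ 2 - t + 1) * H2 + 3 * t * HK)) =
      ((7 / 4) * H2 + 5 * HK) / (H2 + 3 * HK) ∧
    (5 : ℝ) / 3 < ((7 / 4) * H2 + 5 * HK) / (H2 + 3 * HK) := by
  have hden : (0:ℝ) < H2 + 3 * HK := by linarith
  constructor
  · set f : ℝ → ℝ := fun t =>
      if t ≤ 1 then H2 + 3 * HK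
      else (2 - t) * ((t ^ 2 - t + 1) * H2 + 3 * t * HK) with hf
    have hcont : Continuous f := by
      apply Continuous.if_le
      · exact continuous_const
      · continuity
      · exact continuous_id
      · exact continuous_const
      · intro x hx; subst hx; ring
    have hsplit : (∫ t in (0:ℝ)..2, f t) =
        (∫ t in (0:ℝ)..1, f t) + ∫ t in (1:ℝ)..2, f t :=
      (intervalIntegral.integral_add_adjacent_intervals
        (hcont.intervalIntegrable 0 1) (hcont.intervalIntegrable 1 2)).symm
    have h1 : (∫ t in (0:ℝ)..1, f t) = H2 + 3 * HK := by
      rw [intervalIntegral.integral_congr (g := fun _ => H2 + 3 * HK)]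
      · simp
      · intro t ht
        rw [Set.uIcc_of_le (by norm_num)] at ht
        simp [hf, ht.2]
    have h2 : (∫ t in (1:ℝ)..2, f t) = (3/4) * H2 + 2 * HK := by
      have heq : (∫ t in (1:ℝ)..2, f t) =
          ∫ t in (1:ℝ)..2, (2 - t) * ((t ^ 2 - t + 1) * H2 + 3 * t * HK) := by
        apply intervalIntegral.integral_congr
        intro t ht
        rw [Set.uIcc_of_le (by norm_num)] at ht
        rcases le_or_gt t 1 with h | h
        · have : t = 1 := le_antisymm h ht.1
          subst this; simp [hf]; ring
        · simp [hf, not_le.mpr h]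
      rw [heq]
      have := intervalIntegral.integral_eq_sub_of_hasDerivAt
        (f := fun t : ℝ => (-(t^4)/4 + t^3 - 3/2*t^2 + 2*t) * H2 + (3*t^2 - t^3) * HK)
        (f' := fun t : ℝ => (2 - t) * ((t ^ 2 - t + 1) * H2 + 3 * t * HK))
        (a := 1) (b := 2)
        (fun t _ => by
          have : HasDerivAt (fun t : ℝ => (-(t^4)/4 + t^3 - 3/2*t^2 + 2*t) * H2 + (3*t^2 - t^3) * HK)
              ((-(4*t^3)/4 + 3*t^2 - 3/2*(2*t) + 2) * H2 + (3*(2*t) - 3*t^2) * HK) t := by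
            apply HasDerivAt.add <;> apply HasDerivAt.mul_const
            · have h4 : HasDerivAt (fun t : ℝ => t^4) (4*t^3) t := by
                simpa using hasDerivAt_pow 4 t
              have h3 : HasDerivAt (fun t : ℝ => t^3) (3*t^2) t := by
                simpa using hasDerivAt_pow 3 t
              have h2' : HasDerivAt (fun t : ℝ => t^2) (2*t) t := by
                simpa using hasDerivAt_pow 2 t
              exact (((h4.neg.div_const 4).add h3).sub ((h2'.const_mul (3/2:ℝ)))).add
                (by simpa using (hasDerivAt_id t).const_mul 2)
            · have h3 : HasDerivAt (fun t : ℝ => t^3) (3*t^2) t := by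
                simpa using hasDerivAt_pow 3 t
              have h2' : HasDerivAt (fun t : ℝ => t^2) (2*t) t := by
                simpa using hasDerivAt_pow 2 t
              exact (h2'.const_mul 3).sub h3
          exact this.congr_deriv (by ring))
        (by apply Continuous.intervalIntegrable; continuity)
      rw [this]; norm_num; ring
    rw [hsplit, h1, h2]
    field_simp
    ring
  · rw [lt_div_iff₀ hden]
    nlinarith
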